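/- (Max-flow min-cut, rational capacities) In a finite directed network with source s, sink t, and nonnegative rational edge capacities, the maximum value of an s-t flow equals the minimum capacity of an s-t cut; in particular, if every s-t cut has capacity at least the value v of the source supply, then there exists a feasible flow of value v. -/

import Mathlib

variable {V : Type*} [Fintype V] [DecidableEq V]

/-- `f` is a feasible `s`–`t` flow for the capacity function `c`: each edge
carries between `0` and its capacity, and flow is conserved at every vertex
other than `s` and `t`. -/
def IsFlow (c : V → V → ℚ) (s t : V) (f : V → V → ℚ) : Prop :=
  (∀ u v, 0 ≤ f u v ∧ f u v ≤ c u v) ∧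
  (∀ v, v ≠ s → v ≠ t → ∑ u, f u v = ∑ u, f v u)

/-- The value of a flow `f`: the net flow out of the source `s`. -/
def flowValue (s : V) (f : V → V → ℚ) : ℚ :=
  (∑ u, f s u) - ∑ u, f u s

/-- `S` is an `s`–`t` cut: it contains `s` but not `t`. -/
def IsCut (s t : V) (S : Finset V) : Prop := s ∈ S ∧ t ∉ S

/-- The capacity of a cut `S`: the total capacity of the edges leaving `S`. -/
def cutCapacity (c : V → V → ℚ) (S : Finset V) : ℚ :=
  ∑ u ∈ S, ∑ v ∈ Sᶜ, c u v

set_option linter.unusedSectionVars false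

-- split a list with a duplicate
lemma dup_split {L : List V} (h : ¬ L.Nodup) :
    ∃ (x : V) (A M D : List V), L = A ++ x :: (M ++ x :: D) := by
  obtain ⟨x, hx⟩ := List.exists_duplicate_iff_not_nodup.2 h
  have : List.Sublist [x, x] L := List.duplicate_iff_sublist.1 hx
  rw [show [x,x] = x :: [x] from rfl, List.cons_sublist_iff] at this
  obtain ⟨r₁, r₂, rfl, hx1, hx2⟩ := this
  have hx2' : x ∈ r₂ := by
    have := List.cons_sublist_iff.1 hx2
    obtain ⟨s₁, s₂, rfl, h1, -⟩ := this
    exact List.mem_append.2 (Or.inl h1)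
  obtain ⟨A, B, rfl⟩ := List.append_of_mem hx1
  obtain ⟨C, D, rfl⟩ := List.append_of_mem hx2'
  exact ⟨x, A, B ++ C, D, by simp⟩

lemma exists_nodup_chain' (r : V → V → Prop) :
    ∀ (n : ℕ) (L : List V), L.length ≤ n → L ≠ [] → L.Chain' r →
    ∃ L' : List V, L' ≠ [] ∧ L'.Chain' r ∧ L'.head? = L.head? ∧
      L'.getLast? = L.getLast? ∧ L'.Nodup := by
  intro n
  induction n with
  | zero => intro L hL hne _; cases L <;> simp_all
  | succ n ih =>
    intro L hL hne hch
    by_cases hnd : L.Nodup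
    · exact ⟨L, hne, hch, rfl, rfl, hnd⟩
    · obtain ⟨x, A, M, D, rfl⟩ := dup_split hnd
      have hch1 : (A ++ x :: D).Chain' r := by
        rw [List.Chain', List.isChain_split] at hch ⊢
        refine ⟨hch.1, ?_⟩
        have := hch.2
        rw [show x :: (M ++ x :: D) = (x :: M) ++ x :: D by simp,
          List.isChain_split] at this
        exact this.2
      have hlen : (A ++ x :: D).length ≤ n := by
        simp only [List.length_append, List.length_cons] at hL ⊢
        omega
      obtain ⟨L', h1, h2, h3, h4, h5⟩ := ih _ hlen (by simp) hch1
      refine ⟨L', h1, h2, ?_, ?_, h5⟩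
      · rw [h3]; cases A <;> simp
      · rw [h4]
        have h6 : (x :: D).getLast? ≠ none := by simp
        rw [show x :: (M ++ x :: D) = (x :: M) ++ x :: D by simp]
        simp only [List.getLast?_append]
        cases hD : (x :: D).getLast? with
        | none => simp at hD
        | some y => simp

/-- edge-indicator function of a list of vertices -/
def pathFn : List V → V → V → ℚ
  | [], _, _ => 0
  | [_], _, _ => 0
  | a :: b :: l, u, v => (if u = a ∧ v = b then 1 else 0) + pathFn (b :: l) u v

lemma pathFn_nonneg (L : List V) (u v : V) : 0 ≤ pathFn L u v := by
  induction L with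
  | nil => simp [pathFn]
  | cons a l ih =>
    cases l with
    | nil => simp [pathFn]
    | cons b l' =>
      simp only [pathFn]
      have := ih
      positivity

lemma pathFn_int (L : List V) (u v : V) : ∃ z : ℤ, pathFn L u v = z := by
  induction L with
  | nil => exact ⟨0, by simp [pathFn]⟩
  | cons a l ih =>
    cases l with
    | nil => exact ⟨0, by simp [pathFn]⟩
    | cons b l' =>
      obtain ⟨z, hz⟩ := ih
      refine ⟨(if u = a ∧ v = b then 1 else 0) + z, ?_⟩
      simp only [pathFn, hz]
      split <;> push_cast <;> ring

lemma pathFn_src_not_mem (L : List V) (u v : V) (h : u ∉ L) : pathFn L u v = 0 := by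
  induction L with
  | nil => simp [pathFn]
  | cons a l ih =>
    cases l with
    | nil => simp [pathFn]
    | cons b l' =>
      simp only [pathFn]
      have h1 : u ≠ a := fun e => h (e ▸ List.mem_cons_self)
      have h2 : u ∉ b :: l' := fun e => h (List.mem_cons_of_mem _ e)
      rw [ih h2]
      simp [h1]

lemma pathFn_le_one (L : List V) (hL : L.Nodup) (u v : V) : pathFn L u v ≤ 1 := by
  induction L with
  | nil => simp [pathFn]
  | cons a l ih =>
    cases l with
    | nil => simp [pathFn]
    | cons b l' =>
      simp only [pathFn]
      by_cases hu : u = a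
      · subst hu
        rw [pathFn_src_not_mem _ _ _ (List.nodup_cons.1 hL).1]
        split <;> norm_num
      · simp only [hu, false_and, if_false, zero_add]
        exact ih (List.nodup_cons.1 hL).2

lemma pathFn_support {r : V → V → Prop} (L : List V) (hL : L.Chain' r) (u v : V)
    (h : pathFn L u v ≠ 0) : r u v := by
  induction L with
  | nil => simp [pathFn] at h
  | cons a l ih =>
    cases l with
    | nil => simp [pathFn] at h
    | cons b l' =>
      simp only [pathFn] at h
      rw [List.Chain', List.isChain_cons_cons] at hL
      by_cases he : u = a ∧ v = b
      · exact he.1 ▸ he.2 ▸ hL.1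
      · simp only [he, if_false, zero_add] at h
        exact ih hL.2 h

lemma pathFn_dvg (L : List V) (x : V) :
    (∑ v, pathFn L x v) - (∑ v, pathFn L v x) =
      (if L.head? = some x then 1 else 0) - (if L.getLast? = some x then 1 else 0) := by
  induction L with
  | nil => simp [pathFn]
  | cons a l ih =>
    cases l with
    | nil =>
      simp only [pathFn]
      simp only [List.head?_cons, List.getLast?_singleton]
      simp
    | cons b l' =>
      simp only [pathFn, Finset.sum_add_distrib]
      have h1 : (∑ v, if x = a ∧ v = b then (1:ℚ) else 0) = if x = a then 1 else 0 := by
        by_cases hx : x = a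
        · simp [hx]
        · simp [hx]
      have h2 : (∑ v, if v = a ∧ x = b then (1:ℚ) else 0) = if x = b then 1 else 0 := by
        by_cases hx : x = b
        · simp [hx]
        · simp [hx]
      rw [h1, h2]
      have hlast : (a :: b :: l').getLast? = (b :: l').getLast? := by
        rw [show a :: b :: l' = [a] ++ b :: l' by simp, List.getLast?_append]
        cases h : (b :: l').getLast? with
        | none => simp at h
        | some y => rfl
      rw [hlast]
      have h3 := ih
      rw [List.head?_cons] at h3 ⊢
      have e1 : (if some a = some x then (1:ℚ) else 0) = if x = a then 1 else 0 := by
        simp [eq_comm]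
      have e2 : (if some b = some x then (1:ℚ) else 0) = if x = b then 1 else 0 := by
        simp [eq_comm]
      rw [e2] at h3
      rw [e1]
      linarith [h3]

/-- net flow across a cut equals the value of the flow -/
lemma value_eq_net {c f : V → V → ℚ} {s t : V} (hf : IsFlow c s t f) {S : Finset V}
    (hS : IsCut s t S) :
    flowValue s f = ∑ u ∈ S, ∑ v ∈ Sᶜ, (f u v - f v u) := by
  have key : ∑ w ∈ S, ((∑ v, f w v) - ∑ v, f v w) = flowValue s f := by
    rw [Finset.sum_eq_single s]
    · rfl
    · intro w hw hws
      have hwt : w ≠ t := fun e => hS.2 (e ▸ hw)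
      rw [hf.2 w hws hwt]
      ring
    · intro h; exact absurd hS.1 h
  rw [← key]
  have expand : ∀ w, ((∑ v, f w v) - ∑ v, f v w) =
      ((∑ v ∈ S, (f w v - f v w)) + ∑ v ∈ Sᶜ, (f w v - f v w)) := by
    intro w
    rw [Finset.sum_add_sum_compl S (fun v => f w v - f v w)]
    rw [Finset.sum_sub_distrib]
  have zero1 : ∑ w ∈ S, ∑ v ∈ S, (f w v - f v w) = 0 := by
    have e : ∑ w ∈ S, ∑ v ∈ S, (f w v - f v w)
        = (∑ w ∈ S, ∑ v ∈ S, f w v) - ∑ w ∈ S, ∑ v ∈ S, f v w := by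
      rw [← Finset.sum_sub_distrib]
      exact Finset.sum_congr rfl fun w _ => Finset.sum_sub_distrib _ _
    rw [e, Finset.sum_comm (s := S) (t := S) (f := fun w v => f w v)]
    exact sub_self _
  rw [Finset.sum_congr rfl (fun w _ => expand w), Finset.sum_add_distrib, zero1, zero_add]

/-- weak duality -/
lemma flow_le_cut {c f : V → V → ℚ} {s t : V} (hc : ∀ u v, 0 ≤ c u v)
    (hf : IsFlow c s t f) {S : Finset V} (hS : IsCut s t S) :
    flowValue s f ≤ cutCapacity c S := by
  rw [value_eq_net hf hS]
  refine Finset.sum_le_sum fun u _ => Finset.sum_le_sum fun v _ => ?_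
  have h1 := (hf.1 u v).2
  have h2 := (hf.1 v u).1
  linarith

/-- existence of a minimum cut -/
lemma exists_min_cut (c : V → V → ℚ) (s t : V) (hst : s ≠ t) :
    ∃ S : Finset V, IsCut s t S ∧ ∀ R, IsCut s t R → cutCapacity c S ≤ cutCapacity c R := by
  classical
  have hne : ({t}ᶜ : Finset V) ∈ Finset.univ.filter (fun S => IsCut s t S) := by
    rw [Finset.mem_filter]; simp [IsCut, Finset.mem_compl, hst]
  obtain ⟨S, hS, hmin⟩ := Finset.exists_min_image
    (Finset.univ.filter (fun S => IsCut s t S)) (cutCapacity c) ⟨_, hne⟩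
  refine ⟨S, (Finset.mem_filter.1 hS).2, fun R hR => hmin R ?_⟩
  simp [hR]

/-- the integrality predicate -/
def Ints (f : V → V → ℚ) : Prop := ∀ u v, ∃ z : ℤ, f u v = z

/-- the residual relation -/
def res (c f : V → V → ℚ) (u v : V) : Prop := 1 ≤ c u v - f u v + f v u

/-- if `t` is not residually reachable from `s`, the reachable set is a cut whose
capacity equals the flow value -/
lemma no_path_cut {c f : V → V → ℚ} {s t : V} (hf : IsFlow c s t f)
    (hci : Ints c) (hfi : Ints f)
    (hnr : ¬ Relation.ReflTransGen (res c f) s t) :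
    ∃ S : Finset V, IsCut s t S ∧ flowValue s f = cutCapacity c S := by
  classical
  set S : Finset V := Finset.univ.filter (fun v => Relation.ReflTransGen (res c f) s v) with hSdef
  have hsS : s ∈ S := by simp [hSdef]; exact Relation.ReflTransGen.refl
  have htS : t ∉ S := by simp [hSdef, hnr]
  have hcut : IsCut s t S := ⟨hsS, htS⟩
  refine ⟨S, hcut, ?_⟩
  rw [value_eq_net hf hcut, cutCapacity]
  refine Finset.sum_congr rfl fun u hu => Finset.sum_congr rfl fun v hv => ?_
  have hu' : Relation.ReflTransGen (res c f) s u := by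
    simpa [hSdef] using hu
  have hv' : ¬ Relation.ReflTransGen (res c f) s v := by
    simpa [hSdef] using Finset.mem_compl.1 hv
  have hres : ¬ res c f u v := fun h => hv' (hu'.tail h)
  rw [res] at hres
  push_neg at hres
  -- c u v - f u v + f v u < 1 and all are integers, so ≤ 0
  obtain ⟨z1, hz1⟩ := hci u v
  obtain ⟨z2, hz2⟩ := hfi u v
  obtain ⟨z3, hz3⟩ := hfi v u
  have hle : c u v - f u v + f v u ≤ 0 := by
    rw [hz1, hz2, hz3] at hres ⊢
    have : z1 - z2 + z3 < 1 := by exact_mod_cast hres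
    have : z1 - z2 + z3 ≤ 0 := by omega
    exact_mod_cast this
  have h1 := (hf.1 u v).2
  have h2 := (hf.1 v u).1
  -- f u v = c u v and f v u = 0
  have : f u v = c u v ∧ f v u = 0 := by constructor <;> linarith
  rw [this.1, this.2]
  ring

/-- augmenting step: a residual path gives a flow of value one more -/
lemma augment {c f : V → V → ℚ} {s t : V} (hc : ∀ u v, 0 ≤ c u v)
    (hf : IsFlow c s t f) (hci : Ints c) (hfi : Ints f) (hst : s ≠ t)
    (hr : Relation.ReflTransGen (res c f) s t) :
    ∃ f', IsFlow c s t f' ∧ Ints f' ∧ flowValue s f' = flowValue s f + 1 := by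
  classical
  obtain ⟨l, hl1, hl2⟩ := List.exists_isChain_cons_of_relationReflTransGen hr
  have hch' : (s :: l).Chain' (res c f) := hl1
  have hlast' : (s :: l).getLast? = some t := by
    rw [List.getLast?_eq_getLast (List.cons_ne_nil _ _), hl2]
  obtain ⟨L, hLne, hLch, hLh, hLl, hLnd⟩ :=
    exists_nodup_chain' (res c f) (s :: l).length (s :: l) le_rfl (by simp) hch'
  rw [List.head?_cons] at hLh
  rw [hlast'] at hLl
  set p : V → V → ℚ := pathFn L with hp
  have hp0 : ∀ u v, 0 ≤ p u v := pathFn_nonneg L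
  have hp1 : ∀ u v, p u v ≤ 1 := pathFn_le_one L hLnd
  have hpr : ∀ u v, p u v ≠ 0 → res c f u v := pathFn_support L hLch
  have hpi : ∀ u v, ∃ z : ℤ, p u v = z := pathFn_int L
  have hpd : ∀ x, (∑ v, p x v) - (∑ v, p v x) =
      (if x = s then 1 else 0) - (if x = t then 1 else 0) := by
    intro x
    rw [pathFn_dvg L x, hLh, hLl]
    congr 1 <;> simp [eq_comm]
  set g : V → V → ℚ := fun u v => f u v + p u v with hg
  set f' : V → V → ℚ := fun u v => g u v - min (g u v) (g v u) with hf'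
  have hkey : ∀ u v, f' u v - f' v u = g u v - g v u := by
    intro u v
    simp only [hf']
    rw [min_comm (g v u) (g u v)]
    ring
  have hnn : ∀ u v, 0 ≤ f' u v := by
    intro u v
    simp only [hf']
    have : min (g u v) (g v u) ≤ g u v := min_le_left _ _
    linarith
  have hcap : ∀ u v, f' u v ≤ c u v := by
    intro u v
    by_cases hpz : p u v = 0
    · have : f' u v ≤ g u v := by
        simp only [hf']
        have := hp0 v u
        have h2 := (hf.1 v u).1
        have : 0 ≤ min (g u v) (g v u) := le_min (by simp only [hg]; have := hp0 u v; have := (hf.1 u v).1; linarith) (by simp only [hg]; linarith)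
        linarith
      simp only [hg, hpz, add_zero] at this
      linarith [(hf.1 u v).2]
    · have hres := hpr u v hpz
      rw [res] at hres
      by_cases hle : f u v + p u v ≤ c u v
      · have hmin : 0 ≤ min (g u v) (g v u) := by
          refine le_min ?_ ?_ <;> simp only [hg]
          · linarith [(hf.1 u v).1, hp0 u v]
          · linarith [(hf.1 v u).1, hp0 v u]
        simp only [hf', hg]
        linarith
      · push_neg at hle
        obtain ⟨z1, hz1⟩ := hci u v
        obtain ⟨z2, hz2⟩ := hfi u v
        have hge : c u v ≤ f u v := by
          have h1 : c u v - 1 < f u v := by linarith [hp1 u v]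
          rw [hz1, hz2] at h1 ⊢
          have h2 : z1 - 1 < z2 := by exact_mod_cast h1
          exact_mod_cast (by omega : z1 ≤ z2)
        have hvu1 : 1 ≤ f v u := by linarith
        have hgvu : 1 ≤ g v u := by simp only [hg]; linarith [hp0 v u]
        rcases le_total (g u v) (g v u) with h | h
        · simp only [hf', min_eq_left h]
          simpa using hc u v
        · simp only [hf', min_eq_right h]
          simp only [hg]
          linarith [hp1 u v, (hf.1 u v).2, hvu1, hp0 v u]
  have hcons : ∀ v, v ≠ s → v ≠ t → ∑ u, f' u v = ∑ u, f' v u := by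
    intro v hvs hvt
    have h1 : (∑ u, f' v u) - (∑ u, f' u v) = ∑ u, (f' v u - f' u v) :=
      (Finset.sum_sub_distrib _ _).symm
    have h2 : ∑ u, (f' v u - f' u v) = ∑ u, (g v u - g u v) :=
      Finset.sum_congr rfl fun u _ => hkey v u
    have h3 : ∑ u, (g v u - g u v) =
        ((∑ u, f v u) - ∑ u, f u v) + ((∑ u, p v u) - ∑ u, p u v) := by
      simp only [hg]
      rw [Finset.sum_sub_distrib, Finset.sum_add_distrib, Finset.sum_add_distrib]
      ring
    have h4 := hf.2 v hvs hvt
    have h5 := hpd v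
    simp only [if_neg hvs, if_neg hvt, sub_zero] at h5
    have : (∑ u, f' v u) - (∑ u, f' u v) = 0 := by
      rw [h1, h2, h3, h4]
      linarith
    linarith
  have hval : flowValue s f' = flowValue s f + 1 := by
    have h1 : flowValue s f' = ∑ u, (f' s u - f' u s) := (Finset.sum_sub_distrib _ _).symm
    have h2 : ∑ u, (f' s u - f' u s) = ∑ u, (g s u - g u s) :=
      Finset.sum_congr rfl fun u _ => hkey s u
    have h3 : ∑ u, (g s u - g u s) =
        ((∑ u, f s u) - ∑ u, f u s) + ((∑ u, p s u) - ∑ u, p u s) := by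
      simp only [hg]
      rw [Finset.sum_sub_distrib, Finset.sum_add_distrib, Finset.sum_add_distrib]
      ring
    have h5 := hpd s
    rw [if_pos rfl, if_neg hst] at h5
    have h6 : flowValue s f = (∑ u, f s u) - ∑ u, f u s := rfl
    rw [h1, h2, h3, h6]
    linarith
  refine ⟨f', ⟨fun u v => ⟨hnn u v, hcap u v⟩, hcons⟩, ?_, hval⟩
  intro u v
  obtain ⟨z1, hz1⟩ := hfi u v
  obtain ⟨z2, hz2⟩ := hpi u v
  obtain ⟨z3, hz3⟩ := hfi v u
  obtain ⟨z4, hz4⟩ := hpi v u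
  refine ⟨z1 + z2 - min (z1 + z2) (z3 + z4), ?_⟩
  simp only [hf', hg, hz1, hz2, hz3, hz4]
  push_cast [Int.cast_min]
  ring_nf

lemma ints_sum {α : Type*} (s : Finset α) (f : α → ℚ) (h : ∀ i, ∃ z : ℤ, f i = z) :
    ∃ z : ℤ, ∑ i ∈ s, f i = z := by
  classical
  choose g hg using h
  exact ⟨∑ i ∈ s, g i, by rw [Finset.sum_congr rfl fun i _ => hg i]; push_cast; rfl⟩

lemma cut_int {c : V → V → ℚ} (hci : Ints c) (S : Finset V) :
    ∃ z : ℤ, cutCapacity c S = z :=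
  ints_sum _ _ fun u => ints_sum _ _ fun v => hci u v

lemma value_int {f : V → V → ℚ} (hfi : Ints f) (s : V) :
    ∃ z : ℤ, flowValue s f = z := by
  obtain ⟨z1, h1⟩ := ints_sum Finset.univ (fun u => f s u) (fun u => hfi s u)
  obtain ⟨z2, h2⟩ := ints_sum Finset.univ (fun u => f u s) (fun u => hfi u s)
  exact ⟨z1 - z2, by rw [flowValue, h1, h2]; push_cast; ring⟩

/-- max-flow = min-cut for integral capacities -/
lemma exists_flow_eq_int {c : V → V → ℚ} (hc : ∀ u v, 0 ≤ c u v) (hci : Ints c)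
    {s t : V} (hst : s ≠ t) {S₀ : Finset V} (hS₀ : IsCut s t S₀)
    (hmin : ∀ R, IsCut s t R → cutCapacity c S₀ ≤ cutCapacity c R) :
    ∃ f, IsFlow c s t f ∧ flowValue s f = cutCapacity c S₀ := by
  have aux : ∀ k : ℕ, ∀ f, IsFlow c s t f → Ints f →
      cutCapacity c S₀ - flowValue s f ≤ k →
      ∃ f', IsFlow c s t f' ∧ flowValue s f' = cutCapacity c S₀ := by
    intro k
    induction k with
    | zero =>
      intro f hf hfi hk
      refine ⟨f, hf, le_antisymm (flow_le_cut hc hf hS₀) ?_⟩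
      push_cast at hk
      linarith
    | succ k ih =>
      intro f hf hfi hk
      by_cases hreach : Relation.ReflTransGen (res c f) s t
      · obtain ⟨f', hf', hfi', hval'⟩ := augment hc hf hci hfi hst hreach
        refine ih f' hf' hfi' ?_
        rw [hval']
        push_cast at hk ⊢
        linarith
      · obtain ⟨S, hScut, hSval⟩ := no_path_cut hf hci hfi hreach
        refine ⟨f, hf, le_antisymm (flow_le_cut hc hf hS₀) ?_⟩
        rw [hSval]
        exact hmin S hScut
  refine aux ⌈cutCapacity c S₀⌉₊ (fun _ _ => 0) ⟨fun u v => ⟨le_refl 0, hc u v⟩,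
    fun v _ _ => rfl⟩ (fun u v => ⟨0, rfl⟩) ?_
  have h0 : flowValue s (fun _ _ => (0:ℚ)) = 0 := by simp [flowValue]
  rw [h0, sub_zero]
  exact Nat.le_ceil _

lemma exists_max_flow (c : V → V → ℚ) (hc : ∀ u v, 0 ≤ c u v) (s t : V) (hst : s ≠ t)
    {S₀ : Finset V} (hS₀ : IsCut s t S₀)
    (hmin : ∀ R, IsCut s t R → cutCapacity c S₀ ≤ cutCapacity c R) :
    ∃ f, IsFlow c s t f ∧ flowValue s f = cutCapacity c S₀ := by
  classical
  set N : ℕ := ∏ u : V, ∏ v : V, (c u v).den with hN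
  have hNpos : 0 < N := Finset.prod_pos fun u _ => Finset.prod_pos fun v _ => (c u v).pos
  have hdvd : ∀ u v, (c u v).den ∣ N := by
    intro u v
    have h1 : (c u v).den ∣ ∏ w : V, (c u w).den :=
      Finset.dvd_prod_of_mem (fun w => (c u w).den) (Finset.mem_univ v)
    have h2 : (∏ w : V, (c u w).den) ∣ N :=
      Finset.dvd_prod_of_mem (fun x => ∏ w : V, (c x w).den) (Finset.mem_univ u)
    exact dvd_trans h1 h2
  set c' : V → V → ℚ := fun u v => (N : ℚ) * c u v with hc'
  have hc'0 : ∀ u v, 0 ≤ c' u v := fun u v => mul_nonneg (by positivity) (hc u v)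
  have hc'i : Ints c' := by
    intro u v
    obtain ⟨m, hm⟩ := hdvd u v
    refine ⟨m * (c u v).num, ?_⟩
    have hden : ((c u v).den : ℚ) ≠ 0 := by exact_mod_cast (c u v).den_nz
    have hval : ((c u v).num : ℚ) = c u v * (c u v).den :=
      (div_eq_iff hden).1 (Rat.num_div_den (c u v))
    simp only [hc']
    push_cast [hm]
    rw [hval]; ring
  have hcut' : ∀ S, cutCapacity c' S = (N : ℚ) * cutCapacity c S := by
    intro S
    simp only [cutCapacity, hc', Finset.mul_sum]
  have hmin' : ∀ R, IsCut s t R → cutCapacity c' S₀ ≤ cutCapacity c' R := by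
    intro R hR
    rw [hcut', hcut']
    have := hmin R hR
    have hN0 : (0:ℚ) ≤ N := by positivity
    exact mul_le_mul_of_nonneg_left this hN0
  obtain ⟨f', hf', hval'⟩ := exists_flow_eq_int hc'0 hc'i hst hS₀ hmin'
  set f : V → V → ℚ := fun u v => f' u v / N with hfdef
  have hNne : (N : ℚ) ≠ 0 := by positivity
  refine ⟨f, ⟨fun u v => ⟨?_, ?_⟩, fun v hvs hvt => ?_⟩, ?_⟩
  · exact div_nonneg (hf'.1 u v).1 (by positivity)
  · have := (hf'.1 u v).2
    simp only [hfdef, hc'] at this ⊢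
    rw [div_le_iff₀ (by positivity)]
    linarith [this]
  · have := hf'.2 v hvs hvt
    simp only [hfdef, ← Finset.sum_div]
    rw [this]
  · have : flowValue s f = flowValue s f' / N := by
      simp only [flowValue, hfdef, ← Finset.sum_div]
      ring
    rw [this, hval', hcut']
    field_simp


/-- Max-flow min-cut with rational capacities: in a finite network with
nonnegative capacities, there exist a flow and a cut with equal value and
capacity, the flow being maximum and the cut minimum; in particular, if every
`s`–`t` cut has capacity at least the (nonnegative) supply `v`, then there is
a feasible flow of value exactly `v`. -/
theorem max_flow_min_cut (c : V → V → ℚ) (hc : ∀ u v, 0 ≤ c u v) (s t : V)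
    (hst : s ≠ t) :
    (∃ f S, IsFlow c s t f ∧ IsCut s t S ∧ flowValue s f = cutCapacity c S ∧
      (∀ g, IsFlow c s t g → flowValue s g ≤ flowValue s f) ∧
      (∀ R, IsCut s t R → cutCapacity c S ≤ cutCapacity c R)) ∧
    (∀ v : ℚ, 0 ≤ v → (∀ S, IsCut s t S → v ≤ cutCapacity c S) →
      ∃ f, IsFlow c s t f ∧ flowValue s f = v) := by
  obtain ⟨S₀, hS₀, hmin⟩ := exists_min_cut c s t hst
  obtain ⟨f, hf, hval⟩ := exists_max_flow c hc s t hst hS₀ hmin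
  constructor
  · exact ⟨f, S₀, hf, hS₀, hval,
      fun g hg => (flow_le_cut hc hg hS₀).trans_eq hval.symm, hmin⟩
  · intro v hv0 hvle
    have hvM : v ≤ flowValue s f := by rw [hval]; exact hvle S₀ hS₀
    rcases eq_or_lt_of_le (hv0.trans hvM) with hM | hM
    · -- flowValue s f = 0, hence v = 0 hence zero flow
      refine ⟨fun _ _ => 0, ⟨fun u v => ⟨le_refl 0, hc u v⟩, fun _ _ _ => rfl⟩, ?_⟩
      have : v = 0 := le_antisymm (by rw [← hM] at hvM; linarith) hv0
      simp [flowValue, this]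
    · set M := flowValue s f with hMdef
      set g : V → V → ℚ := fun u w => (v / M) * f u w with hg
      have hratio0 : 0 ≤ v / M := div_nonneg hv0 (le_of_lt hM)
      have hratio1 : v / M ≤ 1 := by
        rw [div_le_one hM]; exact hvM
      refine ⟨g, ⟨fun u w => ⟨mul_nonneg hratio0 (hf.1 u w).1, ?_⟩, fun w hws hwt => ?_⟩, ?_⟩
      · calc (v / M) * f u w ≤ 1 * f u w :=
              mul_le_mul_of_nonneg_right hratio1 (hf.1 u w).1
          _ = f u w := one_mul _
          _ ≤ c u w := (hf.1 u w).2
      · simp only [hg, ← Finset.mul_sum]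
        rw [hf.2 w hws hwt]
      · simp only [flowValue, hg, ← Finset.mul_sum]
        rw [← mul_sub, ← flowValue, ← hMdef]
        field_simp
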